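/- Let q ∈ ℝ with q > 1, and for n ∈ ℤ set λ_n = (1/2)·ln((q+1)/(q−1)) + i n π. Let a : ℤ → ℂ satisfy Σ_{n∈ℤ} |a_n| < ∞ with a not identically zero, and define y(t) = Σ_{n∈ℤ} a_n e^{λ_n t}. Then for all T₁, T₂ with 2 ≤ T₁ < T₂ − 2: ‖y‖_{L²(T₁,T₂)} − ‖y‖_{L²(T₁−2,T₂−2)} > 0 and q = ( ‖y‖_{L²(T₁,T₂)} + ‖y‖_{L²(T₁−2,T₂−2)} ) / ( ‖y‖_{L²(T₁,T₂)} − ‖y‖_{L²(T₁−2,T₂−2)} ). -/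

import Mathlib

open MeasureTheory Set Function

private lemma norm_exp_int_pi_I (k : ℤ) (x : ℝ) :
    ‖Complex.exp ((k : ℂ) * Real.pi * Complex.I * (x : ℂ))‖ = 1 := by
  have h : (k : ℂ) * Real.pi * Complex.I * (x : ℂ)
      = ((k * Real.pi * x : ℝ) : ℂ) * Complex.I := by push_cast; ring
  rw [h, Complex.norm_exp_ofReal_mul_I]

private noncomputable def Fc (a : ℤ → ℂ) (m n : ℤ) (t : ℝ) : ℂ :=
  a n * Complex.exp ((((n - m : ℤ)) : ℂ) * Real.pi * Complex.I * (t : ℂ))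

private lemma coeff_eq_zero (a : ℤ → ℂ) (ha : Summable fun n => ‖a n‖)
    (hg : ∀ t : ℝ,
      (∑' n : ℤ, a n * Complex.exp ((n : ℂ) * (Real.pi : ℂ) * Complex.I * (t : ℂ))) = 0)
    (m : ℤ) : a m = 0 := by
  have hFcont : ∀ n, Continuous (Fc a m n) := by
    intro n; unfold Fc; fun_prop
  have hnorm : ∀ n t, ‖Fc a m n t‖ = ‖a n‖ := by
    intro n t; unfold Fc; rw [norm_mul, norm_exp_int_pi_I, mul_one]
  have hInt : ∀ n, Integrable (Fc a m n) (volume.restrict (Ioc (0:ℝ) 2)) :=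
    fun n => (hFcont n).integrableOn_Ioc
  have hμ : ((volume.restrict (Ioc (0:ℝ) 2)) Set.univ).toReal = 2 := by
    rw [Measure.restrict_apply_univ, Real.volume_Ioc,
      ENNReal.toReal_ofReal (by norm_num)]
    norm_num
  have hint_norm : ∀ n, (∫ t, ‖Fc a m n t‖ ∂(volume.restrict (Ioc (0:ℝ) 2))) = 2 * ‖a n‖ := by
    intro n
    simp_rw [hnorm n]
    rw [integral_const, measureReal_def, hμ, smul_eq_mul]
  have hsum2 : Summable fun n => ∫ t, ‖Fc a m n t‖ ∂(volume.restrict (Ioc (0:ℝ) 2)) := by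
    simp_rw [hint_norm]; exact ha.mul_left 2
  have hswap := integral_tsum_of_summable_integral_norm hInt hsum2
  have hptw : ∀ t : ℝ, (∑' n, Fc a m n t) = 0 := by
    intro t
    have h1 : ∀ n : ℤ, Fc a m n t
        = (a n * Complex.exp ((n : ℂ) * (Real.pi : ℂ) * Complex.I * (t : ℂ)))
          * Complex.exp (((-m : ℤ) : ℂ) * (Real.pi : ℂ) * Complex.I * (t : ℂ)) := by
      intro n
      unfold Fc
      rw [show ((((n - m : ℤ)) : ℂ) * Real.pi * Complex.I * (t : ℂ))
          = ((n : ℂ) * (Real.pi : ℂ) * Complex.I * (t : ℂ))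
            + (((-m : ℤ) : ℂ) * (Real.pi : ℂ) * Complex.I * (t : ℂ)) from by push_cast; ring,
        Complex.exp_add]
      ring
    rw [tsum_congr h1, tsum_mul_right, hg t, zero_mul]
  have hrhs : (∫ t, (∑' n, Fc a m n t) ∂(volume.restrict (Ioc (0:ℝ) 2))) = 0 := by
    simp_rw [hptw]; simp
  have hintF : ∀ n, n ≠ m → (∫ t, Fc a m n t ∂(volume.restrict (Ioc (0:ℝ) 2))) = 0 := by
    intro n hn
    rw [← intervalIntegral.integral_of_le (by norm_num : (0:ℝ) ≤ 2)]
    unfold Fc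
    have hc0 : (((n - m : ℤ)) : ℂ) * Real.pi * Complex.I ≠ 0 :=
      mul_ne_zero (mul_ne_zero (Int.cast_ne_zero.mpr (sub_ne_zero.mpr hn))
        (Complex.ofReal_ne_zero.mpr Real.pi_ne_zero)) Complex.I_ne_zero
    rw [intervalIntegral.integral_const_mul, integral_exp_mul_complex hc0]
    have h2 : Complex.exp ((((n - m : ℤ)) : ℂ) * Real.pi * Complex.I * ((2:ℝ):ℂ)) = 1 := by
      rw [show ((((n - m : ℤ)) : ℂ) * Real.pi * Complex.I * ((2:ℝ):ℂ))
          = ((n - m : ℤ) : ℂ) * (2 * (Real.pi : ℂ) * Complex.I) from by push_cast; ring,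
        Complex.exp_int_mul_two_pi_mul_I]
    rw [h2]
    norm_num
  have hintFm : (∫ t, Fc a m m t ∂(volume.restrict (Ioc (0:ℝ) 2))) = 2 * a m := by
    have h1 : ∀ t : ℝ, Fc a m m t = a m := by
      intro t; unfold Fc; simp
    simp_rw [h1]
    rw [integral_const, measureReal_def, hμ, Complex.real_smul]
    norm_num
  have hlhs : (∑' n, ∫ t, Fc a m n t ∂(volume.restrict (Ioc (0:ℝ) 2))) = 2 * a m := by
    rw [tsum_eq_single m hintF, hintFm]
  rw [hlhs, hrhs] at hswap
  simpa using hswap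

/-- Corollary 3.1 of the paper (coefficient-identification part) for the anti-stable wave
equation: closed-form exact recovery of the anti-damping coefficient `q` from two shifted
windows of the exact output. -/
theorem wave_exact_identification (q : ℝ) (hq : 1 < q)
    (lam : ℤ → ℂ)
    (hlam : ∀ n : ℤ,
      lam n = ((Real.log ((q + 1) / (q - 1)) : ℂ)) / 2 + (n : ℂ) * (Real.pi : ℂ) * Complex.I)
    (a : ℤ → ℂ) (ha : Summable fun n => ‖a n‖) (ha0 : a ≠ 0)
    (y : ℝ → ℂ) (hy : ∀ t : ℝ, y t = ∑' n : ℤ, a n * Complex.exp (lam n * (t : ℂ)))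
    (T₁ T₂ : ℝ) (h1 : 2 ≤ T₁) (h2 : T₁ < T₂ - 2) :
    0 < Real.sqrt (∫ t in T₁..T₂, ‖y t‖ ^ 2) -
        Real.sqrt (∫ t in (T₁ - 2)..(T₂ - 2), ‖y t‖ ^ 2) ∧
    q = (Real.sqrt (∫ t in T₁..T₂, ‖y t‖ ^ 2) +
          Real.sqrt (∫ t in (T₁ - 2)..(T₂ - 2), ‖y t‖ ^ 2)) /
        (Real.sqrt (∫ t in T₁..T₂, ‖y t‖ ^ 2) -
          Real.sqrt (∫ t in (T₁ - 2)..(T₂ - 2), ‖y t‖ ^ 2)) := by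
  have hq1 : (0:ℝ) < q - 1 := by linarith
  set r : ℝ := (q + 1) / (q - 1) with hrdef
  have hr0 : 0 < r := by positivity
  have hr1 : 1 < r := (one_lt_div hq1).mpr (by linarith)
  set σ : ℝ := Real.log r with hσ
  have hexpσ : Real.exp σ = r := Real.exp_log hr0
  set g : ℝ → ℂ := fun t : ℝ =>
    ∑' n : ℤ, a n * Complex.exp ((n : ℂ) * (Real.pi : ℂ) * Complex.I * (t : ℂ)) with hgdef
  have hyg : ∀ t : ℝ, y t = Complex.exp ((σ : ℂ) / 2 * (t : ℂ)) * g t := by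
    intro t
    rw [hy t]
    simp only [hgdef]
    rw [← tsum_mul_left]
    refine tsum_congr fun n => ?_
    rw [hlam n]
    rw [show ((((σ : ℝ)) : ℂ) / 2 + (n : ℂ) * (Real.pi : ℂ) * Complex.I) * (t : ℂ)
        = (σ : ℂ) / 2 * (t : ℂ) + (n : ℂ) * (Real.pi : ℂ) * Complex.I * (t : ℂ) from by ring,
      Complex.exp_add]
    ring
  have hgc : Continuous g := by
    rw [hgdef]
    refine continuous_tsum (fun n => by fun_prop) ha ?_
    intro n t
    rw [norm_mul, norm_exp_int_pi_I, mul_one]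
  have hyc : Continuous y := by
    have hfe : y = fun t : ℝ => Complex.exp ((σ : ℂ) / 2 * (t : ℂ)) * g t := funext hyg
    rw [hfe]; fun_prop
  have hper : Function.Periodic g 2 := by
    intro t
    simp only [hgdef]
    refine tsum_congr fun n => ?_
    congr 1
    rw [show (n : ℂ) * (Real.pi : ℂ) * Complex.I * ((t + 2 : ℝ) : ℂ)
        = (n : ℂ) * (Real.pi : ℂ) * Complex.I * (t : ℂ)
          + (n : ℂ) * (2 * (Real.pi : ℂ) * Complex.I) from by push_cast; ring,
      Complex.exp_add, Complex.exp_int_mul_two_pi_mul_I, mul_one]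
  have hshift : ∀ t : ℝ, y (t + 2) = (r : ℂ) * y t := by
    intro t
    rw [hyg, hyg t]
    rw [show ((σ : ℝ) : ℂ) / 2 * ((t + 2 : ℝ) : ℂ)
        = (σ : ℂ) + (σ : ℂ) / 2 * (t : ℂ) from by push_cast; ring,
      Complex.exp_add]
    have her : Complex.exp ((σ : ℝ) : ℂ) = (r : ℂ) := by
      rw [← Complex.ofReal_exp, hexpσ]
    rw [her, hper t]
    ring
  set c := T₁ - 2 with hcdef
  set d := T₂ - 2 with hddef
  have hcd : c < d := by rw [hcdef, hddef]; linarith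
  have hnsq : ∀ t : ℝ, ‖y (t + 2)‖ ^ 2 = r ^ 2 * ‖y t‖ ^ 2 := by
    intro t
    rw [hshift t, norm_mul, Complex.norm_real, Real.norm_of_nonneg hr0.le, mul_pow]
  have hIeq : (∫ t in T₁..T₂, ‖y t‖ ^ 2) = r ^ 2 * ∫ t in c..d, ‖y t‖ ^ 2 := by
    have e1 : c + 2 = T₁ := by rw [hcdef]; ring
    have e2 : d + 2 = T₂ := by rw [hddef]; ring
    calc (∫ t in T₁..T₂, ‖y t‖ ^ 2) = ∫ t in c..d, ‖y (t + 2)‖ ^ 2 := by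
          rw [intervalIntegral.integral_comp_add_right (fun s => ‖y s‖ ^ 2) 2, e1, e2]
      _ = ∫ t in c..d, r ^ 2 * ‖y t‖ ^ 2 := by simp_rw [hnsq]
      _ = r ^ 2 * ∫ t in c..d, ‖y t‖ ^ 2 := intervalIntegral.integral_const_mul _ _
  obtain ⟨m, hm⟩ : ∃ m, a m ≠ 0 := by
    by_contra h; push_neg at h; exact ha0 (funext fun n => h n)
  obtain ⟨t0, ht0⟩ : ∃ t0 : ℝ, g t0 ≠ 0 := by
    by_contra h; push_neg at h
    refine hm (coeff_eq_zero a ha ?_ m)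
    intro t
    simpa [hgdef] using h t
  obtain ⟨t1, ht1, hgt1⟩ := hper.exists_mem_Ioc two_pos t0 c
  have hgt1' : g t1 ≠ 0 := hgt1 ▸ ht0
  have hyt1 : y t1 ≠ 0 := by
    rw [hyg]
    exact mul_ne_zero (Complex.exp_ne_zero _) hgt1'
  have ht1mem : t1 ∈ Ioo c d := by
    refine ⟨ht1.1, lt_of_le_of_lt ht1.2 ?_⟩
    rw [hcdef, hddef]; linarith
  have hpos : 0 < ∫ t in c..d, ‖y t‖ ^ 2 := by
    rw [intervalIntegral.integral_pos_iff_support_of_nonneg_ae (f := fun t => ‖y t‖ ^ 2)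
      (Filter.Eventually.of_forall fun t => by positivity)
      ((hyc.norm.pow 2).intervalIntegrable c d)]
    refine ⟨hcd, ?_⟩
    have hopen : IsOpen (Ioo c d ∩ {t : ℝ | y t ≠ 0}) :=
      isOpen_Ioo.inter (isOpen_compl_iff.mpr (isClosed_singleton.preimage hyc))
    have hsub : Ioo c d ∩ {t : ℝ | y t ≠ 0} ⊆ support (fun t => ‖y t‖ ^ 2) ∩ Ioc c d := by
      rintro t ⟨htI, hty⟩
      exact ⟨pow_ne_zero _ (norm_ne_zero_iff.mpr hty), Ioo_subset_Ioc_self htI⟩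
    exact lt_of_lt_of_le (hopen.measure_pos volume ⟨t1, ht1mem, hyt1⟩) (measure_mono hsub)
  set B := Real.sqrt (∫ t in c..d, ‖y t‖ ^ 2) with hBdef
  have hB : 0 < B := Real.sqrt_pos.mpr hpos
  have hA : Real.sqrt (∫ t in T₁..T₂, ‖y t‖ ^ 2) = r * B := by
    rw [hIeq, hBdef, Real.sqrt_mul (by positivity), Real.sqrt_sq hr0.le]
  have hqr : q * (r - 1) = r + 1 := by
    rw [hrdef]
    field_simp
    ring
  constructor
  · rw [hA]; nlinarith
  · rw [hA, eq_div_iff (by nlinarith)]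
    linear_combination B * hqr
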